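/- Assume λ_i > 0 for all i = 1,…,N, and let h → ∞ (|h| → ∞ in ℂ) with r_1,…,r_{N−1} fixed, where κ_1,…,κ_N depend on h as specified. Then W^κ(u) · ∏_{1≤i<j≤N}(κ_i − κ_j)^{−1} → det M(u); in particular, for |h| sufficiently large the κ_i are pairwise distinct so the left-hand side is defined. -/

import Mathlib

open scoped BigOperators

noncomputable section

namespace GRTV

/-- `κ_i(h) = ∏_{j=i}^{N−1} h^{λ_j+λ_{j+1}}/r_j` (written `0`-based: `κ_{N-1} = 1` and
`κ_i = ∏_{j ∈ [i, N-1)} h^{λ_j+λ_{j+1}}/r_j`), so that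
`h^{λ_i+λ_{i+1}} κ_{i+1}/κ_i = r_i` for all `i`. -/
def kap (N : ℕ) (lam : ℕ → ℕ) (r : ℕ → ℂ) (h : ℂ) (i : Fin N) : ℂ :=
  ∏ j ∈ Finset.Ico (i : ℕ) (N - 1), (h ^ (lam j + lam (j + 1)) / r j)

/-- The discrete Wronskian
`W^κ(u) = det( κ_i^{N−j} ∏_{k=1}^{λ_i} (u − γ_{i,k} + h(i−j)) )_{i,j=1}^N`
(indices written `0`-based, so the exponent `N−j` becomes `N−1−j`). -/
def Wmat (N : ℕ) (lam : ℕ → ℕ) (γ : ℕ → ℕ → ℂ) (r : ℕ → ℂ) (u h : ℂ) :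
    Matrix (Fin N) (Fin N) ℂ :=
  Matrix.of fun i j =>
    kap N lam r h i ^ (N - 1 - (j : ℕ)) *
      ∏ k ∈ Finset.range (lam i), (u - γ i k + h * (((i : ℕ) : ℂ) - ((j : ℕ) : ℂ)))

/-- The tridiagonal matrix `M(u)`: `M_{i,i} = ∏_{k=1}^{λ_i}(u − γ_{i,k})`,
`M_{i,i+1} = (−1)^{λ_i}`, `M_{i+1,i} = r_i`, and `M_{i,j} = 0` for `|i−j| > 1`. -/
def Mmat (N : ℕ) (lam : ℕ → ℕ) (γ : ℕ → ℕ → ℂ) (r : ℕ → ℂ) (u : ℂ) :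
    Matrix (Fin N) (Fin N) ℂ :=
  Matrix.of fun i j =>
    if i = j then ∏ k ∈ Finset.range (lam i), (u - γ i k)
    else if (i : ℕ) + 1 = (j : ℕ) then (-1 : ℂ) ^ (lam i)
    else if (j : ℕ) + 1 = (i : ℕ) then r j
    else 0

open Polynomial Finset Filter

-- generic: sum of distinct naturals
theorem aux_sum_range (n : ℕ) : ∀ (T : Finset ℕ), T.card = n →
    (∑ x ∈ Finset.range n, x ≤ ∑ x ∈ T, x ∧ (∑ x ∈ T, x = ∑ x ∈ Finset.range n, x → T = Finset.range n)) := by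
  induction n with
  | zero => intro T hT; simp [Finset.card_eq_zero.mp hT]
  | succ n ih =>
    intro T hT
    have hne : T.Nonempty := Finset.card_pos.mp (by omega)
    set M := T.max' hne with hM
    have hMem : M ∈ T := T.max'_mem hne
    have hsub : T ⊆ Finset.range (M+1) := by
      intro x hx; simp only [Finset.mem_range]
      exact Nat.lt_succ_of_le (T.le_max' x hx)
    have hcard : n + 1 ≤ M + 1 := by
      simpa [hT] using Finset.card_le_card hsub
    have hMn : n ≤ M := by omega
    have hTe : (T.erase M).card = n := by simp [Finset.card_erase_of_mem hMem, hT]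
    obtain ⟨ih1, ih2⟩ := ih (T.erase M) hTe
    have hsumT : ∑ x ∈ T, x = M + ∑ x ∈ T.erase M, x := (Finset.add_sum_erase T id hMem).symm
    constructor
    · rw [Finset.sum_range_succ, hsumT]
      omega
    · intro heq
      rw [Finset.sum_range_succ, hsumT] at heq
      have h1 : ∑ x ∈ Finset.range n, x ≤ ∑ x ∈ T.erase M, x := ih1
      have hMeq : M = n := by omega
      have h2 : ∑ x ∈ T.erase M, x = ∑ x ∈ Finset.range n, x := by omega
      have := ih2 h2
      rw [Finset.range_add_one, ← this, ← hMeq]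
      exact (Finset.insert_erase hMem).symm

theorem coeff_prod' {ι : Type*} (s : Finset ι) (f : ι → ℂ[X]) (n : ι → ℕ)
    (h : ∀ i ∈ s, (f i).natDegree ≤ n i) :
    (∏ i ∈ s, f i).coeff (∑ i ∈ s, n i) = ∏ i ∈ s, (f i).coeff (n i) := by
  induction s using Finset.cons_induction with
  | empty => simp
  | cons a s ha ih =>
    rw [Finset.prod_cons, Finset.sum_cons, Finset.prod_cons,
      Polynomial.coeff_mul_add_eq_of_natDegree_le (h a (Finset.mem_cons_self a s))
        ((Polynomial.natDegree_prod_le s f).trans (Finset.sum_le_sum fun i hi => h i (Finset.mem_cons_of_mem hi))),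
      ih (fun i hi => h i (Finset.mem_cons_of_mem hi))]

theorem tendsto_eval_div_pow (P : ℂ[X]) (n : ℕ) (hP : P.natDegree ≤ n) :
    Tendsto (fun h : ℂ => P.eval h / h ^ n) (Bornology.cobounded ℂ) (nhds (P.coeff n)) := by
  have hinv : Tendsto (fun h : ℂ => h⁻¹) (Bornology.cobounded ℂ) (nhds 0) := by
    rw [tendsto_zero_iff_norm_tendsto_zero]
    simpa [norm_inv] using ((tendsto_norm_cobounded_atTop (E := ℂ)).inv_tendsto_atTop.congr (fun _ => rfl) :
      Tendsto (fun x : ℂ => ‖x‖⁻¹) (Bornology.cobounded ℂ) (nhds 0))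
  have hev : ∀ᶠ h : ℂ in Bornology.cobounded ℂ, h ≠ 0 := by
    filter_upwards [eventually_cobounded_le_norm (E := ℂ) 1] with h hh
    intro h0; rw [h0] at hh; simp at hh; linarith
  have key : ∀ h : ℂ, P.eval h / h ^ n = ∑ k ∈ Finset.range (n+1), P.coeff k * h ^ k / h ^ n := by
    intro h
    rw [Polynomial.eval_eq_sum_range' (Nat.lt_succ_of_le hP), Finset.sum_div]
  rw [funext key]
  have hlim : ∀ k ∈ Finset.range (n+1),
      Tendsto (fun h : ℂ => P.coeff k * h ^ k / h ^ n) (Bornology.cobounded ℂ)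
        (nhds (if k = n then P.coeff n else 0)) := by
    intro k hk
    rcases eq_or_ne k n with rfl | hkn
    · simp only [if_pos rfl, if_true]
      refine Tendsto.congr' ?_ tendsto_const_nhds
      filter_upwards [hev] with h hh
      field_simp
    · simp only [if_neg hkn]
      have hklt : k < n := by have := Finset.mem_range.mp hk; omega
      have : Tendsto (fun h : ℂ => P.coeff k * (h⁻¹) ^ (n - k)) (Bornology.cobounded ℂ) (nhds 0) := by
        have := (hinv.pow (n - k)).const_mul (P.coeff k)
        simpa [zero_pow (by omega : n - k ≠ 0)] using this
      refine Tendsto.congr' ?_ this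
      filter_upwards [hev] with h hh
      have hn : (h:ℂ) ^ n = h ^ k * h ^ (n - k) := by rw [← pow_add]; congr 1; omega
      rw [inv_pow, hn]
      field_simp
  have hfin := tendsto_finset_sum (Finset.range (n+1)) hlim
  have hsum : (∑ k ∈ Finset.range (n+1), if k = n then P.coeff n else 0) = P.coeff n := by
    rw [Finset.sum_ite_eq' (Finset.range (n+1)) n (fun _ => P.coeff n)]
    rw [if_pos (Finset.self_mem_range_succ n)]
  rwa [hsum] at hfin

theorem eventually_eval_ne (P : ℂ[X]) (hP : P ≠ 0) :
    ∀ᶠ h : ℂ in Bornology.cobounded ℂ, P.eval h ≠ 0 := by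
  have h1 := tendsto_eval_div_pow P P.natDegree le_rfl
  have h2 : P.coeff P.natDegree ≠ 0 := by
    exact Polynomial.leadingCoeff_ne_zero.mpr hP
  have hev : ∀ᶠ h : ℂ in Bornology.cobounded ℂ, h ≠ 0 := by
    filter_upwards [eventually_cobounded_le_norm (E := ℂ) 1] with h hh
    intro h0; rw [h0] at hh; simp at hh; linarith
  filter_upwards [h1.eventually_ne h2, hev] with h hne h0
  intro habs
  exact hne (by rw [habs, zero_div])


noncomputable def cc (N : ℕ) (r : ℕ → ℂ) (i : ℕ) : ℂ := ∏ j ∈ Finset.Ico i (N-1), (r j)⁻¹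
def dd (N : ℕ) (lam : ℕ → ℕ) (i : ℕ) : ℕ := ∑ j ∈ Finset.Ico i (N-1), (lam j + lam (j+1))
noncomputable def Pm (lam : ℕ → ℕ) (γ : ℕ → ℕ → ℂ) (u : ℂ) (i : ℕ) : ℂ :=
  ∏ k ∈ Finset.range (lam i), (u - γ i k)

theorem kap_eq (N : ℕ) (lam : ℕ → ℕ) (r : ℕ → ℂ) (h : ℂ) (i : Fin N) :
    kap N lam r h i = cc N r i * h ^ dd N lam i := by
  unfold kap cc dd
  rw [Finset.prod_div_distrib, Finset.prod_pow_eq_pow_sum, div_eq_mul_inv, ← Finset.prod_inv_distrib]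
  ring

theorem cc_ne (N : ℕ) (r : ℕ → ℂ) (hr : ∀ j, j + 1 < N → r j ≠ 0) (i : ℕ) : cc N r i ≠ 0 := by
  unfold cc
  rw [Finset.prod_ne_zero_iff]
  intro j hj
  have := Finset.mem_Ico.mp hj
  exact inv_ne_zero (hr j (by omega))

theorem cc_succ (N : ℕ) (r : ℕ → ℂ) (hr : ∀ j, j + 1 < N → r j ≠ 0) (i : ℕ) (hi : i < N - 1) :
    cc N r (i+1) = r i * cc N r i := by
  have h1 : cc N r i = (r i)⁻¹ * cc N r (i+1) := by
    unfold cc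
    rw [Finset.prod_eq_prod_Ico_succ_bot hi]
  rw [h1, ← mul_assoc, mul_inv_cancel₀ (hr i (by omega)), one_mul]

theorem dd_succ (N : ℕ) (lam : ℕ → ℕ) (i : ℕ) (hi : i < N - 1) :
    dd N lam i = (lam i + lam (i+1)) + dd N lam (i+1) := by
  unfold dd
  rw [Finset.sum_eq_sum_Ico_succ_bot hi]

theorem dd_strict (N : ℕ) (lam : ℕ → ℕ) (hlam : ∀ i < N, 0 < lam i) (i j : ℕ)
    (hij : i < j) (hj : j < N) : dd N lam j < dd N lam i := by
  have hsplit : dd N lam i = (∑ k ∈ Finset.Ico i j, (lam k + lam (k+1))) + dd N lam j := by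
    unfold dd
    rw [Finset.sum_Ico_consecutive]
    · omega
    · omega
  have hpos : 0 < ∑ k ∈ Finset.Ico i j, (lam k + lam (k+1)) := by
    have hmem : i ∈ Finset.Ico i j := Finset.mem_Ico.mpr ⟨le_rfl, hij⟩
    have h1 : 0 < lam i + lam (i+1) := by
      have := hlam i (by omega); omega
    calc 0 < lam i + lam (i+1) := h1
    _ ≤ _ := Finset.single_le_sum (f := fun k => lam k + lam (k+1)) (fun k _ => Nat.zero_le _) hmem
  omega


def eE (N : ℕ) (lam : ℕ → ℕ) (i j : ℕ) : ℕ :=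
  dd N lam i * (N - 1 - j) + (if i = j then 0 else lam i)

def Wp (N : ℕ) (lam : ℕ → ℕ) (γ : ℕ → ℕ → ℂ) (u : ℂ) (r : ℕ → ℂ) :
    Matrix (Fin N) (Fin N) ℂ[X] :=
  Matrix.of fun i j =>
    Polynomial.C (cc N r i ^ (N - 1 - (j:ℕ))) * Polynomial.X ^ (dd N lam i * (N - 1 - (j:ℕ))) *
      ∏ k ∈ Finset.range (lam i),
        (Polynomial.C (u - γ i k) + Polynomial.C (((i:ℕ):ℂ) - ((j:ℕ):ℂ)) * Polynomial.X)

def Dp (N : ℕ) (lam : ℕ → ℕ) (r : ℕ → ℂ) : ℂ[X] :=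
  ∏ p ∈ Finset.univ.filter (fun p : Fin N × Fin N => p.1 < p.2),
    (Polynomial.C (cc N r p.1) * Polynomial.X ^ dd N lam p.1
      - Polynomial.C (cc N r p.2) * Polynomial.X ^ dd N lam p.2)

def DD (N : ℕ) (lam : ℕ → ℕ) : ℕ := ∑ i : Fin N, dd N lam i * (N - 1 - (i:ℕ))
def LL (N : ℕ) (r : ℕ → ℂ) : ℂ := ∏ i : Fin N, cc N r i ^ (N - 1 - (i:ℕ))

theorem LL_ne (N : ℕ) (r : ℕ → ℂ) (hr : ∀ j, j + 1 < N → r j ≠ 0) : LL N r ≠ 0 := by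
  unfold LL
  rw [Finset.prod_ne_zero_iff]
  exact fun i _ => pow_ne_zero _ (cc_ne N r hr i)

theorem Wdet_eval (N : ℕ) (lam : ℕ → ℕ) (γ : ℕ → ℕ → ℂ) (u : ℂ) (r : ℕ → ℂ) (h : ℂ) :
    (Wmat N lam γ r u h).det = (Wp N lam γ u r).det.eval h := by
  have : Wmat N lam γ r u h = (Wp N lam γ u r).map (Polynomial.evalRingHom h) := by
    ext i j
    simp only [Wmat, Wp, Matrix.map_apply, Matrix.of_apply, Polynomial.coe_evalRingHom,
      Polynomial.eval_mul, Polynomial.eval_pow, Polynomial.eval_C, Polynomial.eval_X,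
      Polynomial.eval_prod, Polynomial.eval_add]
    rw [kap_eq, mul_pow, ← pow_mul]
    congr 1
    exact Finset.prod_congr rfl fun k _ => by ring
  rw [this]
  exact ((Polynomial.evalRingHom h).map_det (Wp N lam γ u r)).symm

theorem Dp_eval (N : ℕ) (lam : ℕ → ℕ) (r : ℕ → ℂ) (h : ℂ) :
    (∏ p ∈ Finset.univ.filter (fun p : Fin N × Fin N => p.1 < p.2),
      (kap N lam r h p.1 - kap N lam r h p.2)) = (Dp N lam r).eval h := by
  unfold Dp
  rw [Polynomial.eval_prod]
  refine Finset.prod_congr rfl fun p _ => ?_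
  simp [kap_eq]

theorem dd_anti (N : ℕ) (lam : ℕ → ℕ) (i j : ℕ) (hij : i ≤ j) : dd N lam j ≤ dd N lam i := by
  unfold dd
  exact Finset.sum_le_sum_of_subset (Finset.Ico_subset_Ico hij le_rfl)

-- pair sums over p.1 < p.2
theorem pair_sum (N : ℕ) (f : Fin N → ℕ) :
    ∑ p ∈ Finset.univ.filter (fun p : Fin N × Fin N => p.1 < p.2), f p.1
      = ∑ i : Fin N, (N - 1 - (i:ℕ)) * f i := by
  rw [← Finset.univ_product_univ, Finset.sum_filter, Finset.sum_product]
  refine Finset.sum_congr rfl fun i _ => ?_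
  have h1 : ∀ a : Fin N, (if (i, a).1 < (i, a).2 then f (i, a).1 else 0) = if i < a then f i else 0 :=
    fun a => rfl
  simp only [h1]
  rw [← Finset.sum_filter, Finset.sum_const, Finset.filter_lt_eq_Ioi, Fin.card_Ioi, smul_eq_mul]

theorem pair_prod (N : ℕ) (f : Fin N → ℂ) :
    ∏ p ∈ Finset.univ.filter (fun p : Fin N × Fin N => p.1 < p.2), f p.1
      = ∏ i : Fin N, f i ^ (N - 1 - (i:ℕ)) := by
  rw [← Finset.univ_product_univ, Finset.prod_filter, Finset.prod_product]
  refine Finset.prod_congr rfl fun i _ => ?_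
  have h1 : ∀ a : Fin N, (if (i, a).1 < (i, a).2 then f (i, a).1 else 1) = if i < a then f i else 1 :=
    fun a => rfl
  simp only [h1]
  rw [← Finset.prod_filter, Finset.prod_const, Finset.filter_lt_eq_Ioi, Fin.card_Ioi]

theorem natDegree_Dp_le (N : ℕ) (lam : ℕ → ℕ) (r : ℕ → ℂ) :
    (Dp N lam r).natDegree ≤ DD N lam := by
  unfold Dp
  have hDD : DD N lam = ∑ p ∈ Finset.univ.filter (fun p : Fin N × Fin N => p.1 < p.2), dd N lam p.1 := by
    rw [pair_sum N (fun i => dd N lam i)]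
    unfold DD
    exact Finset.sum_congr rfl fun i _ => mul_comm _ _
  rw [hDD]
  refine (Polynomial.natDegree_prod_le _ _).trans ?_
  refine Finset.sum_le_sum fun p hp => ?_
  have hple : (p.1:ℕ) ≤ (p.2:ℕ) := le_of_lt (by exact_mod_cast (Finset.mem_filter.mp hp).2)
  refine (Polynomial.natDegree_sub_le _ _).trans ?_
  simp only [max_le_iff]
  constructor
  · exact (Polynomial.natDegree_C_mul_le _ _).trans (by rw [Polynomial.natDegree_X_pow])
  · exact (Polynomial.natDegree_C_mul_le _ _).trans
      (by rw [Polynomial.natDegree_X_pow]; exact dd_anti N lam _ _ hple)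

theorem coeff_Dp (N : ℕ) (lam : ℕ → ℕ) (hlam : ∀ i < N, 0 < lam i) (r : ℕ → ℂ) :
    (Dp N lam r).coeff (DD N lam) = LL N r := by
  unfold Dp
  have hDD : DD N lam = ∑ p ∈ Finset.univ.filter (fun p : Fin N × Fin N => p.1 < p.2), dd N lam p.1 := by
    rw [pair_sum N (fun i => dd N lam i)]
    unfold DD
    exact Finset.sum_congr rfl fun i _ => mul_comm _ _
  have hbound : ∀ p ∈ Finset.univ.filter (fun p : Fin N × Fin N => p.1 < p.2),
      (Polynomial.C (cc N r p.1) * Polynomial.X ^ dd N lam p.1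
        - Polynomial.C (cc N r p.2) * Polynomial.X ^ dd N lam p.2).natDegree ≤ dd N lam p.1 := by
    intro p hp
    have hple : (p.1:ℕ) ≤ (p.2:ℕ) := le_of_lt (by exact_mod_cast (Finset.mem_filter.mp hp).2)
    refine (Polynomial.natDegree_sub_le _ _).trans ?_
    simp only [max_le_iff]
    exact ⟨(Polynomial.natDegree_C_mul_le _ _).trans (le_of_eq (Polynomial.natDegree_X_pow _)),
      (Polynomial.natDegree_C_mul_le _ _).trans
        (by rw [Polynomial.natDegree_X_pow]; exact dd_anti N lam _ _ hple)⟩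
  rw [hDD, coeff_prod' _ _ _ hbound]
  unfold LL
  rw [← pair_prod N (fun i => cc N r i)]
  refine Finset.prod_congr rfl fun p hp => ?_
  have hlt : dd N lam (p.2:ℕ) < dd N lam (p.1:ℕ) :=
    dd_strict N lam hlam _ _ (by exact_mod_cast (Finset.mem_filter.mp hp).2) p.2.isLt
  rw [Polynomial.coeff_sub, Polynomial.coeff_C_mul, Polynomial.coeff_C_mul,
    Polynomial.coeff_X_pow, Polynomial.coeff_X_pow, if_pos rfl,
    if_neg (by omega), mul_one, mul_zero, sub_zero]


theorem natDegree_linfac (a b : ℂ) : (Polynomial.C a + Polynomial.C b * Polynomial.X).natDegree ≤ 1 := by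
  refine (Polynomial.natDegree_add_le _ _).trans ?_
  simp only [max_le_iff, Polynomial.natDegree_C]
  exact ⟨by omega, (Polynomial.natDegree_C_mul_le _ _).trans (le_of_eq Polynomial.natDegree_X)⟩

theorem coeff_linfac (a b : ℂ) : (Polynomial.C a + Polynomial.C b * Polynomial.X).coeff 1 = b := by
  rw [Polynomial.coeff_add, Polynomial.coeff_C, Polynomial.coeff_C_mul, Polynomial.coeff_X_one]
  simp

theorem qpoly_diag (lam : ℕ → ℕ) (γ : ℕ → ℕ → ℂ) (u : ℂ) (i j : ℕ) (hij : (i:ℂ) = (j:ℂ)) :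
    (∏ k ∈ Finset.range (lam i),
      (Polynomial.C (u - γ i k) + Polynomial.C ((i:ℂ) - (j:ℂ)) * Polynomial.X))
      = Polynomial.C (Pm lam γ u i) := by
  unfold Pm
  rw [map_prod]
  refine Finset.prod_congr rfl fun k _ => ?_
  rw [hij, sub_self, map_zero, zero_mul, add_zero]

theorem Wp_natDegree_le (N : ℕ) (lam : ℕ → ℕ) (γ : ℕ → ℕ → ℂ) (u : ℂ) (r : ℕ → ℂ) (i j : Fin N) :
    (Wp N lam γ u r i j).natDegree ≤ eE N lam i j := by
  unfold Wp eE
  simp only [Matrix.of_apply]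
  refine (Polynomial.natDegree_mul_le).trans ?_
  have h1 : (Polynomial.C (cc N r i ^ (N - 1 - (j:ℕ))) *
      Polynomial.X ^ (dd N lam i * (N - 1 - (j:ℕ)))).natDegree ≤ dd N lam i * (N - 1 - (j:ℕ)) :=
    (Polynomial.natDegree_C_mul_le _ _).trans (le_of_eq (Polynomial.natDegree_X_pow _))
  by_cases hij : (i:ℕ) = (j:ℕ)
  · rw [if_pos hij]
    rw [qpoly_diag lam γ u i j (congrArg (fun t : ℕ => (t:ℂ)) hij)]
    simpa [Polynomial.natDegree_C] using h1
  · rw [if_neg hij]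
    have h2 : (∏ k ∈ Finset.range (lam (i:ℕ)),
        (Polynomial.C (u - γ i k) + Polynomial.C (((i:ℕ):ℂ) - ((j:ℕ):ℂ)) * Polynomial.X)).natDegree
        ≤ lam (i:ℕ) := by
      refine (Polynomial.natDegree_prod_le _ _).trans ?_
      have := Finset.sum_le_card_nsmul (Finset.range (lam (i:ℕ)))
        (fun k => (Polynomial.C (u - γ i k)
          + Polynomial.C (((i:ℕ):ℂ) - ((j:ℕ):ℂ)) * Polynomial.X).natDegree)
        1 (fun k _ => natDegree_linfac _ _)
      simpa using this
    omega


theorem Wp_coeff (N : ℕ) (lam : ℕ → ℕ) (γ : ℕ → ℕ → ℂ) (u : ℂ) (r : ℕ → ℂ) (i j : Fin N) :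
    (Wp N lam γ u r i j).coeff (eE N lam i j)
      = cc N r i ^ (N - 1 - (j:ℕ)) *
        (if (i:ℕ) = (j:ℕ) then Pm lam γ u i else (((i:ℕ):ℂ) - ((j:ℕ):ℂ)) ^ lam (i:ℕ)) := by
  unfold Wp eE
  simp only [Matrix.of_apply]
  rw [mul_assoc, Polynomial.coeff_C_mul]
  congr 1
  by_cases hij : (i:ℕ) = (j:ℕ)
  · rw [if_pos hij, if_pos hij, add_zero,
      qpoly_diag lam γ u i j (congrArg (fun t : ℕ => (t:ℂ)) hij), mul_comm,
      Polynomial.coeff_C_mul, Polynomial.coeff_X_pow, if_pos rfl, mul_one]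
  · rw [if_neg hij, if_neg hij, add_comm (dd N lam (i:ℕ) * (N - 1 - (j:ℕ))) (lam (i:ℕ)),
      Polynomial.coeff_X_pow_mul]
    have hb : ∀ k ∈ Finset.range (lam (i:ℕ)),
        (Polynomial.C (u - γ i k) + Polynomial.C (((i:ℕ):ℂ) - ((j:ℕ):ℂ)) * Polynomial.X).natDegree
          ≤ (fun _ : ℕ => 1) k := fun k _ => natDegree_linfac _ _
    have hc := coeff_prod' (Finset.range (lam (i:ℕ)))
      (fun k => Polynomial.C (u - γ i k) + Polynomial.C (((i:ℕ):ℂ) - ((j:ℕ):ℂ)) * Polynomial.X)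
      (fun _ => 1) hb
    simp only [Finset.sum_const, smul_eq_mul, mul_one, Finset.card_range] at hc
    rw [hc, Finset.prod_congr rfl (fun k _ => coeff_linfac (u - γ (i:ℕ) k) (((i:ℕ):ℂ) - ((j:ℕ):ℂ)))]
    rw [Finset.prod_const, Finset.card_range]


def text (N : ℕ) (τ : Equiv.Perm (Fin N)) (i : ℕ) : ℕ :=
  if h : i < N then (τ ⟨i, h⟩ : ℕ) else i

theorem text_lt (N : ℕ) (τ : Equiv.Perm (Fin N)) {i : ℕ} (hi : i < N) : text N τ i < N := by
  unfold text; rw [dif_pos hi]; exact (τ _).isLt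

theorem text_spec (N : ℕ) (τ : Equiv.Perm (Fin N)) (i : Fin N) : text N τ (i:ℕ) = (τ i : ℕ) := by
  unfold text; rw [dif_pos i.isLt]

theorem text_inj (N : ℕ) (τ : Equiv.Perm (Fin N)) : Function.Injective (text N τ) := by
  intro a b hab
  unfold text at hab
  by_cases ha : a < N <;> by_cases hb : b < N
  · rw [dif_pos ha, dif_pos hb] at hab
    have : τ ⟨a, ha⟩ = τ ⟨b, hb⟩ := Fin.ext hab
    have := τ.injective this
    exact congrArg Fin.val this
  · rw [dif_pos ha, dif_neg hb] at hab
    have : (τ ⟨a, ha⟩ : ℕ) < N := (τ _).isLt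
    omega
  · rw [dif_neg ha, dif_pos hb] at hab
    have : (τ ⟨b, hb⟩ : ℕ) < N := (τ _).isLt
    omega
  · rwa [dif_neg ha, dif_neg hb] at hab

def SS (N : ℕ) (τ : Equiv.Perm (Fin N)) (m : ℕ) : ℤ :=
  ∑ i ∈ Finset.range m, ((text N τ i : ℤ) - (i : ℤ))

theorem sum_text_ge (N : ℕ) (τ : Equiv.Perm (Fin N)) (m : ℕ) :
    ∑ i ∈ Finset.range m, i ≤ ∑ i ∈ Finset.range m, text N τ i := by
  have hcard : ((Finset.range m).image (text N τ)).card = m := by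
    rw [Finset.card_image_of_injective _ (text_inj N τ), Finset.card_range]
  have h1 : ∑ x ∈ (Finset.range m).image (text N τ), x = ∑ i ∈ Finset.range m, text N τ i :=
    Finset.sum_image (fun x _ y _ h => text_inj N τ h)
  have := (aux_sum_range m _ hcard).1
  omega

theorem SS_nonneg (N : ℕ) (τ : Equiv.Perm (Fin N)) (m : ℕ) : 0 ≤ SS N τ m := by
  unfold SS
  rw [Finset.sum_sub_distrib, sub_nonneg]
  have h2 : ((∑ i ∈ Finset.range m, i : ℕ) : ℤ) ≤ ((∑ i ∈ Finset.range m, text N τ i : ℕ) : ℤ) := by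
    exact_mod_cast sum_text_ge N τ m
  push_cast at h2
  exact h2

theorem SS_succ (N : ℕ) (τ : Equiv.Perm (Fin N)) (m : ℕ) :
    SS N τ (m+1) = SS N τ m + ((text N τ m : ℤ) - m) := by
  unfold SS
  rw [Finset.sum_range_succ]

theorem sum_eq_of_SS_zero (N : ℕ) (τ : Equiv.Perm (Fin N)) (m : ℕ) (h : SS N τ m = 0) :
    (Finset.range m).image (text N τ) = Finset.range m := by
  unfold SS at h
  rw [Finset.sum_sub_distrib, sub_eq_zero] at h
  have hsum : ∑ i ∈ Finset.range m, text N τ i = ∑ i ∈ Finset.range m, i := by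
    have : ((∑ i ∈ Finset.range m, text N τ i : ℕ) : ℤ) = ((∑ i ∈ Finset.range m, i : ℕ) : ℤ) := by
      push_cast
      exact h
    exact_mod_cast this
  have hcard : ((Finset.range m).image (text N τ)).card = m := by
    rw [Finset.card_image_of_injective _ (text_inj N τ), Finset.card_range]
  have h1 : ∑ x ∈ (Finset.range m).image (text N τ), x = ∑ i ∈ Finset.range m, text N τ i :=
    Finset.sum_image (fun x _ y _ h => text_inj N τ h)
  have h2 := (aux_sum_range m _ hcard).2
  exact h2 (by omega)

theorem SS_zero_fix (N : ℕ) (τ : Equiv.Perm (Fin N)) (m : ℕ)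
    (h0 : SS N τ m = 0) (h1 : SS N τ (m+1) = 0) : text N τ m = m := by
  have e0 := sum_eq_of_SS_zero N τ m h0
  have e1 := sum_eq_of_SS_zero N τ (m+1) h1
  have hmem : text N τ m ∈ Finset.range (m+1) := by
    rw [← e1]
    exact Finset.mem_image_of_mem _ (Finset.self_mem_range_succ m)
  have hnot : text N τ m ∉ Finset.range m := by
    rw [← e0]
    intro hmem2
    obtain ⟨k, hk, hke⟩ := Finset.mem_image.mp hmem2
    have := text_inj N τ hke
    rw [this] at hk
    exact absurd (Finset.mem_range.mp hk) (lt_irrefl m)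
  have ha : text N τ m < m + 1 := Finset.mem_range.mp hmem
  have hb : ¬ (text N τ m < m) := fun h => hnot (Finset.mem_range.mpr h)
  omega

theorem SS_N (N : ℕ) (τ : Equiv.Perm (Fin N)) : SS N τ N = 0 := by
  have himg : (Finset.range N).image (text N τ) = Finset.range N := by
    apply Finset.eq_of_subset_of_card_le
    · intro x hx
      obtain ⟨k, hk, hke⟩ := Finset.mem_image.mp hx
      rw [← hke]
      exact Finset.mem_range.mpr (text_lt N τ (Finset.mem_range.mp hk))
    · rw [Finset.card_image_of_injective _ (text_inj N τ)]
  have h1 : ∑ x ∈ (Finset.range N).image (text N τ), x = ∑ i ∈ Finset.range N, text N τ i :=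
    Finset.sum_image (fun x _ y _ h => text_inj N τ h)
  have hsum : ∑ i ∈ Finset.range N, text N τ i = ∑ i ∈ Finset.range N, i := by
    rw [← h1, himg]
  unfold SS
  rw [Finset.sum_sub_distrib, sub_eq_zero]
  have : ((∑ i ∈ Finset.range N, text N τ i : ℕ) : ℤ) = ((∑ i ∈ Finset.range N, i : ℕ) : ℤ) := by
    exact_mod_cast hsum
  push_cast at this
  exact this


theorem SS_zero (N : ℕ) (τ : Equiv.Perm (Fin N)) : SS N τ 0 = 0 := by
  unfold SS; simp

theorem abel_id (N : ℕ) (hN : 0 < N) (lam : ℕ → ℕ) (τ : Equiv.Perm (Fin N)) :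
    ∑ i ∈ Finset.range N, (dd N lam i : ℤ) * ((text N τ i : ℤ) - (i:ℤ))
      = ∑ m ∈ Finset.range N, (lam m : ℤ) * (SS N τ m + SS N τ (m+1)) := by
  obtain ⟨n, rfl⟩ : ∃ n, N = n + 1 := ⟨N - 1, by omega⟩
  set t : ℕ → ℤ := fun i => ((text (n+1) τ i : ℤ) - (i:ℤ)) with ht
  have step1 : ∑ i ∈ Finset.range (n+1), (dd (n+1) lam i : ℤ) * t i
      = ∑ i ∈ Finset.range (n+1), ∑ j ∈ Finset.Ico i n, ((lam j + lam (j+1) : ℕ) : ℤ) * t i := by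
    refine Finset.sum_congr rfl fun i _ => ?_
    unfold dd
    rw [Nat.add_sub_cancel, Nat.cast_sum, Finset.sum_mul]
  have hIco : ∀ i : ℕ, Finset.Ico i n = (Finset.range n).filter (fun j => i ≤ j) := by
    intro i; ext j; simp [Finset.mem_Ico, and_comm]
  have step2 : ∀ i : ℕ, ∑ j ∈ Finset.Ico i n, ((lam j + lam (j+1) : ℕ) : ℤ) * t i
      = ∑ j ∈ Finset.range n, if i ≤ j then ((lam j + lam (j+1) : ℕ) : ℤ) * t i else 0 := by
    intro i; rw [hIco i, Finset.sum_filter]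
  have step4 : ∀ j ∈ Finset.range n, ∑ i ∈ Finset.range (n+1),
      (if i ≤ j then ((lam j + lam (j+1) : ℕ) : ℤ) * t i else 0)
      = ((lam j + lam (j+1) : ℕ) : ℤ) * SS (n+1) τ (j+1) := by
    intro j hj
    have hjn := Finset.mem_range.mp hj
    have hfil : (Finset.range (n+1)).filter (fun i => i ≤ j) = Finset.range (j+1) := by
      ext i; simp only [Finset.mem_filter, Finset.mem_range]; omega
    rw [← Finset.sum_filter, hfil]
    unfold SS
    rw [Finset.mul_sum]
  calc ∑ i ∈ Finset.range (n+1), (dd (n+1) lam i : ℤ) * t i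
      = ∑ i ∈ Finset.range (n+1), ∑ j ∈ Finset.range n,
          (if i ≤ j then ((lam j + lam (j+1) : ℕ) : ℤ) * t i else 0) := by
        rw [step1]; exact Finset.sum_congr rfl fun i _ => step2 i
    _ = ∑ j ∈ Finset.range n, ∑ i ∈ Finset.range (n+1),
          (if i ≤ j then ((lam j + lam (j+1) : ℕ) : ℤ) * t i else 0) := Finset.sum_comm
    _ = ∑ j ∈ Finset.range n, ((lam j + lam (j+1) : ℕ) : ℤ) * SS (n+1) τ (j+1) :=
        Finset.sum_congr rfl step4
    _ = ∑ j ∈ Finset.range n, ((lam j : ℤ) * SS (n+1) τ (j+1) + (lam (j+1) : ℤ) * SS (n+1) τ (j+1)) := by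
        refine Finset.sum_congr rfl fun j _ => ?_
        push_cast
        ring
    _ = ∑ j ∈ Finset.range n, (lam j : ℤ) * SS (n+1) τ (j+1)
        + ∑ j ∈ Finset.range n, (lam (j+1) : ℤ) * SS (n+1) τ (j+1) := Finset.sum_add_distrib
    _ = ∑ m ∈ Finset.range (n+1), (lam m : ℤ) * (SS (n+1) τ m + SS (n+1) τ (m+1)) := by
        have e1 : ∑ j ∈ Finset.range n, (lam j : ℤ) * SS (n+1) τ (j+1)
            = ∑ j ∈ Finset.range (n+1), (lam j : ℤ) * SS (n+1) τ (j+1) := by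
          rw [Finset.sum_range_succ, SS_N, mul_zero, add_zero]
        have e2 : ∑ j ∈ Finset.range n, (lam (j+1) : ℤ) * SS (n+1) τ (j+1)
            = ∑ m ∈ Finset.range (n+1), (lam m : ℤ) * SS (n+1) τ m := by
          rw [Finset.sum_range_succ' (fun m => (lam m : ℤ) * SS (n+1) τ m) n, SS_zero, mul_zero, add_zero]
        rw [e1, e2, ← Finset.sum_add_distrib]
        refine Finset.sum_congr rfl fun m _ => ?_
        ring

theorem perm_bound (N : ℕ) (hN : 0 < N) (lam : ℕ → ℕ) (hlam : ∀ i < N, 0 < lam i)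
    (σ : Equiv.Perm (Fin N)) :
    (∑ i : Fin N, eE N lam (σ i) i ≤ DD N lam) ∧
    ((∃ i : Fin N, (i:ℕ) + 1 < (σ i : ℕ) ∨ (σ i : ℕ) + 1 < (i:ℕ)) →
      ∑ i : Fin N, eE N lam (σ i) i < DD N lam) := by
  set τ := σ⁻¹ with hτ
  -- reindex
  have hreidx : ∑ i : Fin N, eE N lam (σ i) i = ∑ i : Fin N, eE N lam i (τ i) := by
    have := Equiv.sum_comp τ (fun i : Fin N => eE N lam (σ i) (i:ℕ))
    rw [← this]
    refine Finset.sum_congr rfl fun i _ => ?_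
    rw [hτ]
    simp
  -- to range sums
  have hrange : ∑ i : Fin N, eE N lam i (τ i)
      = ∑ m ∈ Finset.range N, (dd N lam m * (N - 1 - text N τ m)
          + if m = text N τ m then 0 else lam m) := by
    rw [← Fin.sum_univ_eq_sum_range]
    refine Finset.sum_congr rfl fun i _ => ?_
    rw [text_spec]
    rfl
  -- the ℤ-inequality
  have hSnn : ∀ m, 0 ≤ SS N τ m := SS_nonneg N τ
  have hterm : ∀ m ∈ Finset.range N,
      ((if m = text N τ m then 0 else lam m : ℕ) : ℤ) ≤ (lam m : ℤ) * (SS N τ m + SS N τ (m+1)) := by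
    intro m hm
    by_cases hfix : m = text N τ m
    · rw [if_pos hfix]
      push_cast
      exact mul_nonneg (by positivity) (by have := hSnn m; have := hSnn (m+1); omega)
    · rw [if_neg hfix]
      have h1 : 1 ≤ SS N τ m + SS N τ (m+1) := by
        by_contra hcon
        have hm0 : SS N τ m = 0 := by have := hSnn m; have := hSnn (m+1); omega
        have hm1 : SS N τ (m+1) = 0 := by have := hSnn m; have := hSnn (m+1); omega
        exact hfix (SS_zero_fix N τ m hm0 hm1).symm
      nlinarith [Int.ofNat_nonneg (lam m)]
  have hmain : ∑ m ∈ Finset.range N, ((if m = text N τ m then 0 else lam m : ℕ) : ℤ)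
      ≤ ∑ m ∈ Finset.range N, (lam m : ℤ) * (SS N τ m + SS N τ (m+1)) :=
    Finset.sum_le_sum hterm
  -- cast identities
  have hL : ((∑ i : Fin N, eE N lam (σ i) i : ℕ) : ℤ)
      = ∑ m ∈ Finset.range N, ((dd N lam m : ℤ) * ((N:ℤ) - 1 - (text N τ m : ℤ))
          + ((if m = text N τ m then 0 else lam m : ℕ) : ℤ)) := by
    rw [hreidx, hrange, Nat.cast_sum]
    refine Finset.sum_congr rfl fun m hm => ?_
    have hmN := Finset.mem_range.mp hm
    have htlt := text_lt N τ hmN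
    have hsub : ((N - 1 - text N τ m : ℕ) : ℤ) = (N:ℤ) - 1 - (text N τ m : ℤ) := by omega
    push_cast
    rw [hsub]
  have hD : ((DD N lam : ℕ) : ℤ)
      = ∑ m ∈ Finset.range N, (dd N lam m : ℤ) * ((N:ℤ) - 1 - (m : ℤ)) := by
    unfold DD
    rw [← Fin.sum_univ_eq_sum_range (fun m => (dd N lam m : ℤ) * ((N:ℤ) - 1 - (m : ℤ))) N,
      Nat.cast_sum]
    refine Finset.sum_congr rfl fun i _ => ?_
    have hiN := i.isLt
    have hsub : ((N - 1 - (i:ℕ) : ℕ) : ℤ) = (N:ℤ) - 1 - ((i:ℕ) : ℤ) := by omega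
    push_cast
    rw [hsub]
  have habel := abel_id N hN lam τ
  have hsplit : (∑ m ∈ Finset.range N, (dd N lam m : ℤ) * ((N:ℤ) - 1 - (m : ℤ)))
      - (∑ m ∈ Finset.range N, ((dd N lam m : ℤ) * ((N:ℤ) - 1 - (text N τ m : ℤ))
          + ((if m = text N τ m then 0 else lam m : ℕ) : ℤ)))
      = (∑ m ∈ Finset.range N, (dd N lam m : ℤ) * ((text N τ m : ℤ) - (m:ℤ)))
        - ∑ m ∈ Finset.range N, ((if m = text N τ m then 0 else lam m : ℕ) : ℤ) := by
    rw [← Finset.sum_sub_distrib, ← Finset.sum_sub_distrib]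
    exact Finset.sum_congr rfl fun m _ => by ring
  constructor
  · have h1 : ((∑ i : Fin N, eE N lam (σ i) i : ℕ) : ℤ) ≤ ((DD N lam : ℕ) : ℤ) := by
      rw [hL, hD]
      linarith [hmain, habel, hsplit]
    exact_mod_cast h1
  · rintro ⟨i, hbad⟩
    set m₀ := (σ i : ℕ) with hm₀
    have hm₀N : m₀ < N := (σ i).isLt
    have htm₀ : text N τ m₀ = (i : ℕ) := by
      rw [hm₀, text_spec N τ (σ i), hτ]
      simp
    have hm₀mem : m₀ ∈ Finset.range N := Finset.mem_range.mpr hm₀N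
    have hstrict : ((if m₀ = text N τ m₀ then 0 else lam m₀ : ℕ) : ℤ)
        < (lam m₀ : ℤ) * (SS N τ m₀ + SS N τ (m₀+1)) := by
      have hne : m₀ ≠ text N τ m₀ := by rw [htm₀]; omega
      rw [if_neg hne]
      have hs2 : 2 ≤ SS N τ m₀ + SS N τ (m₀+1) := by
        have hsucc := SS_succ N τ m₀
        have h0 := hSnn m₀
        have h1 := hSnn (m₀+1)
        rw [htm₀] at hsucc
        omega
      have hl1 : 1 ≤ (lam m₀ : ℤ) := by exact_mod_cast hlam m₀ hm₀N
      nlinarith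
    have hmainS : ∑ m ∈ Finset.range N, ((if m = text N τ m then 0 else lam m : ℕ) : ℤ)
        < ∑ m ∈ Finset.range N, (lam m : ℤ) * (SS N τ m + SS N τ (m+1)) :=
      Finset.sum_lt_sum hterm ⟨m₀, hm₀mem, hstrict⟩
    have h1 : ((∑ i : Fin N, eE N lam (σ i) i : ℕ) : ℤ) < ((DD N lam : ℕ) : ℤ) := by
      rw [hL, hD]
      linarith [hmainS, habel, hsplit]
    exact_mod_cast h1


-- For σ with |σ i - i| ≤ 1 for all i, σ is a product of disjoint adjacent transpositions.
theorem adj_invol (N : ℕ) (σ : Equiv.Perm (Fin N))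
    (hw : ∀ i : Fin N, (σ i : ℕ) ≤ (i:ℕ) + 1 ∧ (i:ℕ) ≤ (σ i : ℕ) + 1) :
    ∀ n : ℕ, ∀ i j : Fin N, (i:ℕ) = n → (j:ℕ) = (i:ℕ) + 1 → (σ i = j ↔ σ j = i) := by
  intro n
  induction n using Nat.strong_induction_on with
  | _ n IH =>
    intro i j hin hji
    constructor
    · intro hσi
      -- who maps to i?
      set k := σ⁻¹ i with hk
      have hki : σ k = i := (Equiv.eq_symm_apply σ).mp rfl
      have hwk := hw k
      rw [hki] at hwk
      have hkne : k ≠ i := by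
        intro he; rw [he, hσi] at hki; rw [← hki] at hji; omega
      have hknej : k = j ∨ (k:ℕ) + 1 = (i:ℕ) := by
        rcases eq_or_ne k j with he | hne
        · exact Or.inl he
        · right
          have h1 : (k:ℕ) ≠ (i:ℕ) := fun h => hkne (Fin.ext h)
          have h2 : (k:ℕ) ≠ (j:ℕ) := fun h => hne (Fin.ext h)
          omega
      rcases hknej with rfl | hk1
      · exact hki
      · exfalso
        have := (IH (k:ℕ) (by omega) k i rfl (by omega)).mp hki
        rw [this] at hσi
        rw [← hσi] at hji
        omega
    · intro hσj
      set k := σ i with hk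
      have hwk := hw i
      rw [← hk] at hwk
      have hkne : k ≠ i := by
        intro he
        have hii : σ i = i := by rw [← hk, he]
        have h2 : σ j = σ i := by rw [hσj, hii]
        have := σ.injective h2
        rw [this] at hji; omega
      have hknej : k = j ∨ (k:ℕ) + 1 = (i:ℕ) := by
        rcases eq_or_ne k j with he | hne
        · exact Or.inl he
        · right
          have h1 : (k:ℕ) ≠ (i:ℕ) := fun h => hkne (Fin.ext h)
          have h2 : (k:ℕ) ≠ (j:ℕ) := fun h => hne (Fin.ext h)
          omega
      rcases hknej with rfl | hk1
      · rfl
      · exfalso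
        have := (IH (k:ℕ) (by omega) k i rfl (by omega)).mpr hk.symm
        have hjk : σ j = σ k := by rw [hσj, this]
        have := σ.injective hjk
        rw [this] at hji
        omega

def Aset (N : ℕ) (σ : Equiv.Perm (Fin N)) : Finset (Fin N) :=
  Finset.univ.filter (fun i => (σ i : ℕ) = (i:ℕ) + 1)
def Bset (N : ℕ) (σ : Equiv.Perm (Fin N)) : Finset (Fin N) :=
  Finset.univ.filter (fun i => (σ i : ℕ) + 1 = (i:ℕ))
def Fset (N : ℕ) (σ : Equiv.Perm (Fin N)) : Finset (Fin N) :=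
  Finset.univ.filter (fun i => σ i = i)

theorem sigma_sigma_eq (N : ℕ) (σ : Equiv.Perm (Fin N))
    (hw : ∀ i : Fin N, (σ i : ℕ) ≤ (i:ℕ) + 1 ∧ (i:ℕ) ≤ (σ i : ℕ) + 1)
    {i : Fin N} (hi : i ∈ Aset N σ) : σ (σ i) = i := by
  have hA := (Finset.mem_filter.mp hi).2
  exact (adj_invol N σ hw (i:ℕ) i (σ i) rfl hA).mp rfl

theorem Bset_eq (N : ℕ) (σ : Equiv.Perm (Fin N))
    (hw : ∀ i : Fin N, (σ i : ℕ) ≤ (i:ℕ) + 1 ∧ (i:ℕ) ≤ (σ i : ℕ) + 1) :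
    Bset N σ = (Aset N σ).image σ := by
  ext x
  simp only [Bset, Aset, Finset.mem_filter, Finset.mem_image, Finset.mem_univ, true_and]
  constructor
  · intro hx
    have hax : σ (σ x) = x := (adj_invol N σ hw ((σ x : Fin N):ℕ) (σ x) x rfl (by omega)).mpr rfl
    exact ⟨σ x, by rw [hax]; omega, hax⟩
  · rintro ⟨a, ha, rfl⟩
    rw [sigma_sigma_eq N σ hw (Finset.mem_filter.mpr ⟨Finset.mem_univ a, ha⟩)]
    omega

theorem union_FAB (N : ℕ) (σ : Equiv.Perm (Fin N))
    (hw : ∀ i : Fin N, (σ i : ℕ) ≤ (i:ℕ) + 1 ∧ (i:ℕ) ≤ (σ i : ℕ) + 1) {M : Type*} [AddCommMonoid M]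
    (f : Fin N → M) :
    ∑ i, f i = (∑ i ∈ Fset N σ, f i) + (∑ i ∈ Aset N σ, f i) + (∑ i ∈ Bset N σ, f i) := by
  rw [← Finset.sum_filter_add_sum_filter_not Finset.univ (fun i => σ i = i) f]
  have h2 : Finset.univ.filter (fun i => ¬ σ i = i)
      = (Aset N σ) ∪ (Bset N σ) := by
    ext x
    simp only [Finset.mem_filter, Finset.mem_union, Finset.mem_univ, true_and, Aset, Bset]
    have hwx := hw x
    constructor
    · intro hx
      have : (σ x : ℕ) ≠ (x:ℕ) := fun h => hx (Fin.ext h)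
      omega
    · intro hx h
      rw [h] at hx
      omega
  have hdisj : Disjoint (Aset N σ) (Bset N σ) := by
    rw [Finset.disjoint_left]
    intro a haA haB
    simp only [Aset, Bset, Finset.mem_filter] at haA haB
    omega
  rw [h2, Finset.sum_union hdisj, add_assoc]
  rfl

theorem union_FAB_prod (N : ℕ) (σ : Equiv.Perm (Fin N))
    (hw : ∀ i : Fin N, (σ i : ℕ) ≤ (i:ℕ) + 1 ∧ (i:ℕ) ≤ (σ i : ℕ) + 1) {M : Type*} [CommMonoid M]
    (f : Fin N → M) :
    ∏ i, f i = (∏ i ∈ Fset N σ, f i) * (∏ i ∈ Aset N σ, f i) * (∏ i ∈ Bset N σ, f i) := by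
  rw [← Finset.prod_filter_mul_prod_filter_not Finset.univ (fun i => σ i = i) f]
  have h2 : Finset.univ.filter (fun i => ¬ σ i = i)
      = (Aset N σ) ∪ (Bset N σ) := by
    ext x
    simp only [Finset.mem_filter, Finset.mem_union, Finset.mem_univ, true_and, Aset, Bset]
    have hwx := hw x
    constructor
    · intro hx
      have : (σ x : ℕ) ≠ (x:ℕ) := fun h => hx (Fin.ext h)
      omega
    · intro hx h
      rw [h] at hx
      omega
  have hdisj : Disjoint (Aset N σ) (Bset N σ) := by
    rw [Finset.disjoint_left]
    intro a haA haB
    simp only [Aset, Bset, Finset.mem_filter] at haA haB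
    omega
  rw [h2, Finset.prod_union hdisj, mul_assoc]
  rfl

theorem sum_Bset (N : ℕ) (σ : Equiv.Perm (Fin N))
    (hw : ∀ i : Fin N, (σ i : ℕ) ≤ (i:ℕ) + 1 ∧ (i:ℕ) ≤ (σ i : ℕ) + 1) {M : Type*} [AddCommMonoid M]
    (f : Fin N → M) :
    ∑ i ∈ Bset N σ, f i = ∑ i ∈ Aset N σ, f (σ i) := by
  rw [Bset_eq N σ hw]
  exact Finset.sum_image (fun x _ y _ h => σ.injective h)

theorem prod_Bset (N : ℕ) (σ : Equiv.Perm (Fin N))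
    (hw : ∀ i : Fin N, (σ i : ℕ) ≤ (i:ℕ) + 1 ∧ (i:ℕ) ≤ (σ i : ℕ) + 1) {M : Type*} [CommMonoid M]
    (f : Fin N → M) :
    ∏ i ∈ Bset N σ, f i = ∏ i ∈ Aset N σ, f (σ i) := by
  rw [Bset_eq N σ hw]
  exact Finset.prod_image (fun x _ y _ h => σ.injective h)


theorem adj_deg_eq (N : ℕ) (lam : ℕ → ℕ) (σ : Equiv.Perm (Fin N))
    (hw : ∀ i : Fin N, (σ i : ℕ) ≤ (i:ℕ) + 1 ∧ (i:ℕ) ≤ (σ i : ℕ) + 1) :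
    ∑ i : Fin N, eE N lam (σ i) i = DD N lam := by
  have hgoal : DD N lam = ∑ i : Fin N, dd N lam (i:ℕ) * (N - 1 - (i:ℕ)) := rfl
  rw [hgoal, union_FAB N σ hw (fun i => eE N lam (σ i) i),
    union_FAB N σ hw (fun i => dd N lam (i:ℕ) * (N - 1 - (i:ℕ))),
    sum_Bset N σ hw (fun i => eE N lam (σ i) i),
    sum_Bset N σ hw (fun i => dd N lam (i:ℕ) * (N - 1 - (i:ℕ)))]
  have hF : ∑ i ∈ Fset N σ, eE N lam (σ i) i
      = ∑ i ∈ Fset N σ, dd N lam (i:ℕ) * (N - 1 - (i:ℕ)) := by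
    refine Finset.sum_congr rfl fun i hi => ?_
    have hfix : σ i = i := (Finset.mem_filter.mp hi).2
    rw [hfix]
    unfold eE
    rw [if_pos rfl, add_zero]
  rw [hF, add_assoc, add_assoc]
  congr 1
  rw [← Finset.sum_add_distrib, ← Finset.sum_add_distrib]
  refine Finset.sum_congr rfl fun i hi => ?_
  have hA : (σ i : ℕ) = (i:ℕ) + 1 := (Finset.mem_filter.mp hi).2
  have hss : σ (σ i) = i := sigma_sigma_eq N σ hw hi
  have hssv : (σ (σ i) : ℕ) = (i:ℕ) := congrArg Fin.val hss
  have hiN : (i:ℕ) + 1 < N := by have := (σ i).isLt; omega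
  unfold eE
  rw [hssv, hA, if_neg (by omega), if_neg (by omega)]
  have hq : N - 1 - (i:ℕ) = (N - 1 - ((i:ℕ)+1)) + 1 := by omega
  rw [hq, dd_succ N lam (i:ℕ) (by omega)]
  ring

theorem Mmat_diag (N : ℕ) (lam : ℕ → ℕ) (γ : ℕ → ℕ → ℂ) (r : ℕ → ℂ) (u : ℂ) (i : Fin N) :
    Mmat N lam γ r u i i = Pm lam γ u (i:ℕ) := by
  unfold Mmat Pm
  simp

theorem Mmat_sub (N : ℕ) (lam : ℕ → ℕ) (γ : ℕ → ℕ → ℂ) (r : ℕ → ℂ) (u : ℂ) (a b : Fin N)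
    (h : (b:ℕ) + 1 = (a:ℕ)) : Mmat N lam γ r u a b = r (b:ℕ) := by
  unfold Mmat
  simp only [Matrix.of_apply]
  rw [if_neg (by intro he; rw [he] at h; omega), if_neg (by omega), if_pos h]

theorem Mmat_super (N : ℕ) (lam : ℕ → ℕ) (γ : ℕ → ℕ → ℂ) (r : ℕ → ℂ) (u : ℂ) (a b : Fin N)
    (h : (a:ℕ) + 1 = (b:ℕ)) : Mmat N lam γ r u a b = (-1 : ℂ) ^ lam (a:ℕ) := by
  unfold Mmat
  simp only [Matrix.of_apply]
  rw [if_neg (by intro he; rw [he] at h; omega), if_pos h]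

theorem adj_coeff_eq (N : ℕ) (lam : ℕ → ℕ) (γ : ℕ → ℕ → ℂ) (u : ℂ) (r : ℕ → ℂ)
    (hr : ∀ j, j + 1 < N → r j ≠ 0) (σ : Equiv.Perm (Fin N))
    (hw : ∀ i : Fin N, (σ i : ℕ) ≤ (i:ℕ) + 1 ∧ (i:ℕ) ≤ (σ i : ℕ) + 1) :
    (∏ i : Fin N, (cc N r ((σ i : ℕ)) ^ (N - 1 - (i:ℕ)) *
        (if ((σ i : ℕ)) = ((i:ℕ)) then Pm lam γ u (σ i : ℕ)
          else ((((σ i : ℕ)) : ℂ) - (((i:ℕ)) : ℂ)) ^ lam (σ i : ℕ))))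
      = LL N r * ∏ i : Fin N, Mmat N lam γ r u (σ i) i := by
  have hLL : LL N r * ∏ i : Fin N, Mmat N lam γ r u (σ i) i
      = ∏ i : Fin N, (cc N r (i:ℕ) ^ (N - 1 - (i:ℕ)) * Mmat N lam γ r u (σ i) i) := by
    rw [Finset.prod_mul_distrib]
    rfl
  rw [hLL, union_FAB_prod N σ hw, union_FAB_prod N σ hw
      (fun i => cc N r (i:ℕ) ^ (N - 1 - (i:ℕ)) * Mmat N lam γ r u (σ i) i),
    prod_Bset N σ hw, prod_Bset N σ hw
      (fun i => cc N r (i:ℕ) ^ (N - 1 - (i:ℕ)) * Mmat N lam γ r u (σ i) i)]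
  have hF : ∏ i ∈ Fset N σ, (cc N r ((σ i : ℕ)) ^ (N - 1 - (i:ℕ)) *
        (if ((σ i : ℕ)) = ((i:ℕ)) then Pm lam γ u (σ i : ℕ)
          else ((((σ i : ℕ)) : ℂ) - (((i:ℕ)) : ℂ)) ^ lam (σ i : ℕ)))
      = ∏ i ∈ Fset N σ, (cc N r (i:ℕ) ^ (N - 1 - (i:ℕ)) * Mmat N lam γ r u (σ i) i) := by
    refine Finset.prod_congr rfl fun i hi => ?_
    have hfix : σ i = i := (Finset.mem_filter.mp hi).2
    rw [hfix, if_pos rfl, Mmat_diag]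
  rw [hF, mul_assoc, mul_assoc]
  congr 1
  rw [← Finset.prod_mul_distrib, ← Finset.prod_mul_distrib]
  refine Finset.prod_congr rfl fun i hi => ?_
  have hA : (σ i : ℕ) = (i:ℕ) + 1 := (Finset.mem_filter.mp hi).2
  have hss : σ (σ i) = i := sigma_sigma_eq N σ hw hi
  have hssv : (σ (σ i) : ℕ) = (i:ℕ) := congrArg Fin.val hss
  have hiN : (i:ℕ) + 1 < N := by have := (σ i).isLt; omega
  have hMsub : Mmat N lam γ r u (σ i) i = r (i:ℕ) := Mmat_sub N lam γ r u (σ i) i (by omega)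
  have hMsuper : Mmat N lam γ r u (σ (σ i)) (σ i) = (-1 : ℂ) ^ lam (i:ℕ) := by
    rw [hss]
    exact Mmat_super N lam γ r u i (σ i) (by omega)
  rw [hssv, hA, if_neg (by omega), if_neg (by omega), hMsub, hMsuper]
  have hc1 : ((((i:ℕ) + 1 : ℕ)) : ℂ) - (((i:ℕ)) : ℂ) = 1 := by push_cast; ring
  have hc2 : (((i:ℕ)) : ℂ) - ((((i:ℕ) + 1 : ℕ)) : ℂ) = -1 := by push_cast; ring
  rw [hc1, hc2, one_pow]
  have hq : N - 1 - (i:ℕ) = (N - 1 - ((i:ℕ)+1)) + 1 := by omega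
  rw [hq, cc_succ N r hr (i:ℕ) (by omega)]
  ring


theorem Mmat_far (N : ℕ) (lam : ℕ → ℕ) (γ : ℕ → ℕ → ℂ) (r : ℕ → ℂ) (u : ℂ) (a b : Fin N)
    (h : (b:ℕ) + 1 < (a:ℕ) ∨ (a:ℕ) + 1 < (b:ℕ)) : Mmat N lam γ r u a b = 0 := by
  unfold Mmat
  simp only [Matrix.of_apply]
  rw [if_neg (by intro he; rw [he] at h; omega), if_neg (by omega), if_neg (by omega)]

theorem Wdet_natDegree_le (N : ℕ) (hN : 0 < N) (lam : ℕ → ℕ) (hlam : ∀ i < N, 0 < lam i)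
    (γ : ℕ → ℕ → ℂ) (u : ℂ) (r : ℕ → ℂ) :
    (Wp N lam γ u r).det.natDegree ≤ DD N lam := by
  rw [Matrix.det_apply']
  refine Polynomial.natDegree_sum_le_of_forall_le _ _ fun σ _ => ?_
  refine Polynomial.natDegree_mul_le.trans ?_
  have h0 : (((Equiv.Perm.sign σ : ℤ) : ℂ[X])).natDegree = 0 := by
    rw [← Polynomial.C_eq_intCast, Polynomial.natDegree_C]
  rw [h0, zero_add]
  refine (Polynomial.natDegree_prod_le _ _).trans ?_
  refine le_trans (Finset.sum_le_sum fun i _ => Wp_natDegree_le N lam γ u r (σ i) i) ?_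
  exact (perm_bound N hN lam hlam σ).1

theorem Wdet_coeff (N : ℕ) (hN : 0 < N) (lam : ℕ → ℕ) (hlam : ∀ i < N, 0 < lam i)
    (γ : ℕ → ℕ → ℂ) (u : ℂ) (r : ℕ → ℂ) (hr : ∀ j, j + 1 < N → r j ≠ 0) :
    (Wp N lam γ u r).det.coeff (DD N lam) = LL N r * (Mmat N lam γ r u).det := by
  rw [Matrix.det_apply' (Wp N lam γ u r), Matrix.det_apply' (Mmat N lam γ r u),
    Polynomial.finset_sum_coeff, Finset.mul_sum]
  refine Finset.sum_congr rfl fun σ _ => ?_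
  rw [← Polynomial.C_eq_intCast, Polynomial.coeff_C_mul]
  by_cases hw : ∀ i : Fin N, (σ i : ℕ) ≤ (i:ℕ) + 1 ∧ (i:ℕ) ≤ (σ i : ℕ) + 1
  · have hdeq := adj_deg_eq N lam σ hw
    have hcp := coeff_prod' Finset.univ (fun i => Wp N lam γ u r (σ i) i)
        (fun i => eE N lam (σ i) i) (fun i _ => Wp_natDegree_le N lam γ u r (σ i) i)
    rw [hdeq] at hcp
    rw [hcp]
    have hpc : ∏ i : Fin N, (Wp N lam γ u r (σ i) i).coeff (eE N lam (σ i) i)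
        = ∏ i : Fin N, (cc N r ((σ i : ℕ)) ^ (N - 1 - (i:ℕ)) *
            (if ((σ i : ℕ)) = ((i:ℕ)) then Pm lam γ u (σ i : ℕ)
              else ((((σ i : ℕ)) : ℂ) - (((i:ℕ)) : ℂ)) ^ lam (σ i : ℕ))) :=
      Finset.prod_congr rfl fun i _ => Wp_coeff N lam γ u r (σ i) i
    rw [hpc, adj_coeff_eq N lam γ u r hr σ hw]
    ring
  · obtain ⟨i₀, hbad⟩ := not_forall.mp hw
    have hbad' : (i₀:ℕ) + 1 < (σ i₀ : ℕ) ∨ (σ i₀ : ℕ) + 1 < (i₀:ℕ) := by omega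
    have hstrict := (perm_bound N hN lam hlam σ).2 ⟨i₀, hbad'⟩
    have hdegs : (∏ i : Fin N, Wp N lam γ u r (σ i) i).natDegree < DD N lam :=
      lt_of_le_of_lt ((Polynomial.natDegree_prod_le _ _).trans
        (Finset.sum_le_sum fun i _ => Wp_natDegree_le N lam γ u r (σ i) i)) hstrict
    rw [Polynomial.coeff_eq_zero_of_natDegree_lt hdegs]
    have hM0 : ∏ i : Fin N, Mmat N lam γ r u (σ i) i = 0 :=
      Finset.prod_eq_zero (Finset.mem_univ i₀) (Mmat_far N lam γ r u (σ i₀) i₀ (by omega))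
    rw [hM0]
    ring


/-- if all `λ_i > 0` then, as `|h| → ∞` with `r_1,…,r_{N−1}` fixed,
the `κ_i` are eventually pairwise distinct and
`W^κ(u) ∏_{i<j}(κ_i−κ_j)^{−1} → det M(u)`. -/
theorem statement19 (N : ℕ) (hN : 0 < N) (lam : ℕ → ℕ)
    (hlam : ∀ i < N, 0 < lam i) (γ : ℕ → ℕ → ℂ) (u : ℂ)
    (r : ℕ → ℂ) (hr : ∀ j, j + 1 < N → r j ≠ 0) :
    (∀ᶠ h : ℂ in Bornology.cobounded ℂ, Function.Injective (kap N lam r h)) ∧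
    Filter.Tendsto
      (fun h : ℂ => (Wmat N lam γ r u h).det /
        ∏ p ∈ Finset.univ.filter (fun p : Fin N × Fin N => p.1 < p.2),
          (kap N lam r h p.1 - kap N lam r h p.2))
      (Bornology.cobounded ℂ)
      (nhds (Mmat N lam γ r u).det) := by
  have hev0 : ∀ᶠ h : ℂ in Bornology.cobounded ℂ, h ≠ 0 := by
    filter_upwards [eventually_cobounded_le_norm (E := ℂ) 1] with h hh
    intro h0; rw [h0] at hh; simp at hh; linarith
  constructor
  · -- injectivity
    have hpair : ∀ p : Fin N × Fin N, p.1 ≠ p.2 →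
        ∀ᶠ h : ℂ in Bornology.cobounded ℂ, kap N lam r h p.1 ≠ kap N lam r h p.2 := by
      intro p hne
      set Q : Polynomial ℂ := Polynomial.C (cc N r p.1) * Polynomial.X ^ dd N lam p.1
        - Polynomial.C (cc N r p.2) * Polynomial.X ^ dd N lam p.2 with hQdef
      have hdd : dd N lam (p.1:ℕ) ≠ dd N lam (p.2:ℕ) := by
        have hv : (p.1:ℕ) ≠ (p.2:ℕ) := fun h => hne (Fin.ext h)
        rcases lt_or_gt_of_ne hv with h | h
        · exact (dd_strict N lam hlam _ _ h p.2.isLt).ne'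
        · exact (dd_strict N lam hlam _ _ h p.1.isLt).ne
      have hQne : Q ≠ 0 := by
        intro h0
        have hc : Q.coeff (dd N lam p.1) = 0 := by rw [h0]; simp
        rw [hQdef, Polynomial.coeff_sub, Polynomial.coeff_C_mul, Polynomial.coeff_C_mul,
          Polynomial.coeff_X_pow, Polynomial.coeff_X_pow, if_pos rfl,
          if_neg hdd, mul_one, mul_zero, sub_zero] at hc
        exact cc_ne N r hr (p.1:ℕ) hc
      filter_upwards [eventually_eval_ne Q hQne] with h hne2 heq
      apply hne2
      rw [hQdef]
      simp only [Polynomial.eval_sub, Polynomial.eval_mul, Polynomial.eval_C,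
        Polynomial.eval_pow, Polynomial.eval_X]
      rw [← kap_eq, ← kap_eq, heq, sub_self]
    have hall : ∀ p : Fin N × Fin N, ∀ᶠ h : ℂ in Bornology.cobounded ℂ,
        (p.1 ≠ p.2 → kap N lam r h p.1 ≠ kap N lam r h p.2) := by
      intro p
      by_cases hne : p.1 = p.2
      · exact Filter.Eventually.of_forall fun h hc => absurd hne hc
      · exact (hpair p hne).mono fun h hh _ => hh
    filter_upwards [Filter.eventually_all.mpr hall] with h hh
    intro i j hij
    by_contra hne
    exact hh (i, j) hne hij
  · -- the limit
    have h1 := tendsto_eval_div_pow (Wp N lam γ u r).det (DD N lam)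
      (Wdet_natDegree_le N hN lam hlam γ u r)
    have h2 := tendsto_eval_div_pow (Dp N lam r) (DD N lam) (natDegree_Dp_le N lam r)
    rw [Wdet_coeff N hN lam hlam γ u r hr] at h1
    rw [coeff_Dp N lam hlam r] at h2
    have hLL := LL_ne N r hr
    have h3 := h1.div h2 hLL
    rw [mul_div_cancel_left₀ _ hLL] at h3
    refine Filter.Tendsto.congr' ?_ h3
    filter_upwards [hev0] with h hh
    show eval h (Wp N lam γ u r).det / h ^ DD N lam / (eval h (Dp N lam r) / h ^ DD N lam) = _
    rw [div_div_div_cancel_right₀ (pow_ne_zero (DD N lam) hh), ← Wdet_eval, ← Dp_eval]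

end GRTV

end
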